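/- Let A be an abelian group, let 0 ≤ k ≤ n be integers, let S ⊆ {0,1}ⁿ be the k-dimensional face consisting of all vectors whose last n−k coordinates are 0, and let τ : {0,1}ⁿ → {0,1}^{n−k} be the projection to the last n−k coordinates. Let f : S → A be (the restriction to S of) a cube, and let φ : {0,1}^m → {0,1}ⁿ be a cube morphism such that τ∘φ is injective. Then for every cube c' : {0,1}^m → A satisfying c'(u) = f(φ(u)) for all u ∈ φ⁻¹(S), there exists a cube c : {0,1}ⁿ → A whose restriction to S equals f and with c∘φ = c'. -/

import Mathlib

open scoped BigOperators

/-- `c : {0,1}ⁿ → A` is a cube in the abelian group `A`: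
`c(v) = x + v₁t₁ + ⋯ + v_n t_n` for some `x, t₁, …, t_n ∈ A`. -/
def IsCube {A : Type*} [AddCommGroup A] {n : ℕ} (c : (Fin n → Bool) → A) : Prop :=
  ∃ (x : A) (t : Fin n → A), ∀ v, c v = x + ∑ i, if v i then t i else 0

/-- `φ : {0,1}^m → {0,1}ⁿ` is a cube morphism: each coordinate function of `φ` is constant
`0`, constant `1`, a coordinate `vᵢ`, or a negated coordinate `1 − vᵢ`. -/
def IsCubeMorphism {m n : ℕ} (φ : (Fin m → Bool) → (Fin n → Bool)) : Prop :=
  ∀ j : Fin n,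
    (∀ v, φ v j = false) ∨ (∀ v, φ v j = true) ∨
      (∃ i : Fin m, ∀ v, φ v j = v i) ∨ (∃ i : Fin m, ∀ v, φ v j = !(v i))

section Helpers

variable {A : Type*} [AddCommGroup A]

/-- Coordinate types for a cube morphism: a coordinate is either constant `b`, or
`u j` (sign `false`), or `!(u j)` (sign `true`), encoded via `xor`. -/
def evalCT {m : ℕ} : Bool ⊕ (Fin m × Bool) → (Fin m → Bool) → Bool
  | .inl b, _ => b
  | .inr (j, s), u => xor (u j) s

lemma exists_ct {m n : ℕ} {φ : (Fin m → Bool) → (Fin n → Bool)} (hφ : IsCubeMorphism φ) :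
    ∃ e : Fin n → Bool ⊕ (Fin m × Bool), ∀ v i, φ v i = evalCT (e i) v := by
  have h : ∀ i : Fin n, ∃ ct : Bool ⊕ (Fin m × Bool), ∀ v, φ v i = evalCT ct v := by
    intro i
    rcases hφ i with h | h | ⟨j, h⟩ | ⟨j, h⟩
    · exact ⟨.inl false, fun v => by simp [evalCT, h v]⟩
    · exact ⟨.inl true, fun v => by simp [evalCT, h v]⟩
    · exact ⟨.inr (j, false), fun v => by simp [evalCT, h v]⟩
    · exact ⟨.inr (j, true), fun v => by simp [evalCT, h v]⟩
  choose e he using h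
  exact ⟨e, fun v i => he i v⟩

lemma ite_sum_zero {ι : Type*} (s : Finset ι) (b : Prop) [Decidable b] (f : ι → A) :
    (if b then ∑ x ∈ s, f x else 0) = ∑ x ∈ s, if b then f x else 0 := by
  split <;> simp

lemma sum_indicator_comp {m n : ℕ} (v : Fin n → Bool) (ι : Fin m → Fin n) (q : Fin m → A) :
    (∑ i, if v i then (∑ j, if ι j = i then q j else 0) else 0)
      = ∑ j, if v (ι j) then q j else 0 := by
  have h1 : ∀ i : Fin n, (if v i then (∑ j, if ι j = i then q j else 0) else 0)
      = ∑ j, if ι j = i then (if v (ι j) then q j else 0) else 0 := by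
    intro i
    rw [ite_sum_zero]
    refine Finset.sum_congr rfl fun j _ => ?_
    by_cases h : ι j = i
    · subst h; simp
    · simp [h]
  rw [Finset.sum_congr rfl fun i _ => h1 i, Finset.sum_comm]
  refine Finset.sum_congr rfl fun j _ => ?_
  simp

/-- composition of a cube with a cube morphism is a cube -/
lemma IsCube.comp_morphism {m n : ℕ} {c : (Fin n → Bool) → A}
    {φ : (Fin m → Bool) → (Fin n → Bool)} (hc : IsCube c) (hφ : IsCubeMorphism φ) :
    IsCube (fun u => c (φ u)) := by
  obtain ⟨x, t, hct⟩ := hc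
  obtain ⟨e, he⟩ := exists_ct hφ
  classical
  set base : Fin n → A := fun i => match e i with
    | .inl b => if b then t i else 0
    | .inr (_, s) => if s then t i else 0 with hbase
  set coef : Fin n → Fin m → A := fun i j => match e i with
    | .inl _ => 0
    | .inr (j', s) => if j' = j then (if s then -t i else t i) else 0 with hcoef
  have key : ∀ (u : Fin m → Bool) (i : Fin n),
      (if φ u i then t i else 0) = base i + ∑ j, if u j then coef i j else 0 := by
    intro u i
    rw [he u i, hbase, hcoef]
    rcases hei : e i with b | ⟨j₀, s⟩ <;> simp only [hei]
    · cases b <;> simp [evalCT]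
    · have hterm : ∀ j : Fin m,
          (if u j then (if j₀ = j then (if s then -t i else t i) else 0) else 0)
          = if j₀ = j then (if u j₀ then (if s then -t i else t i) else 0) else 0 := by
        intro j
        by_cases h : j₀ = j
        · subst h; simp
        · simp [h]
      rw [Finset.sum_congr rfl fun j _ => hterm j]
      simp only [Finset.sum_ite_eq, Finset.mem_univ, if_true]
      cases s <;> cases hu : u j₀ <;> simp [evalCT, hu]
  refine ⟨x + ∑ i, base i, fun j => ∑ i, coef i j, fun u => ?_⟩
  show c (φ u) = _
  rw [hct (φ u)]
  rw [Finset.sum_congr rfl fun i _ => key u i, Finset.sum_add_distrib, Finset.sum_comm]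
  have h2 : ∀ j : Fin m,
      (∑ i, if u j then coef i j else 0) = if u j then ∑ i, coef i j else 0 := by
    intro j; rw [ite_sum_zero]
  rw [Finset.sum_congr rfl fun j _ => h2 j]
  abel

/-- representation of a cube by its values at `u₀` and the flips of `u₀` -/
lemma cube_repr {m : ℕ} {g : (Fin m → Bool) → A} (hg : IsCube g) (u₀ u : Fin m → Bool) :
    g u = g u₀ + ∑ j, if u j ≠ u₀ j then
      g (Function.update u₀ j (!(u₀ j))) - g u₀ else 0 := by
  classical
  obtain ⟨x, t, hgt⟩ := hg
  have flipdiff : ∀ j : Fin m, g (Function.update u₀ j (!(u₀ j))) - g u₀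
      = (if !(u₀ j) then t j else 0) - (if u₀ j then t j else 0) := by
    intro j
    rw [hgt, hgt]
    have h1 : ∀ j' : Fin m, (if Function.update u₀ j (!(u₀ j)) j' then t j' else 0)
        = Function.update (fun j' => if u₀ j' then t j' else 0) j
            (if !(u₀ j) then t j else 0) j' := by
      intro j'
      by_cases h : j' = j
      · subst h; simp
      · rw [Function.update_of_ne h, Function.update_of_ne h]
    rw [Finset.sum_congr rfl fun j' _ => h1 j']
    rw [Finset.sum_update_of_mem (Finset.mem_univ j)]
    rw [← Finset.add_sum_erase _ _ (Finset.mem_univ j)]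
    rw [Finset.sdiff_singleton_eq_erase]
    abel
  rw [Finset.sum_congr rfl fun j _ => by rw [flipdiff j]]
  rw [hgt u, hgt u₀, add_assoc, add_right_inj, ← Finset.sum_add_distrib]
  refine Finset.sum_congr rfl fun j _ => ?_
  cases hu : u j <;> cases hu0 : u₀ j <;> simp [hu, hu0]

/-- two cubes agreeing at `u₀` and at all flips of `u₀` agree everywhere -/
lemma cube_ext {m : ℕ} {g₁ g₂ : (Fin m → Bool) → A}
    (h₁ : IsCube g₁) (h₂ : IsCube g₂) (u₀ : Fin m → Bool)
    (h0 : g₁ u₀ = g₂ u₀)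
    (hflip : ∀ j, g₁ (Function.update u₀ j (!(u₀ j))) = g₂ (Function.update u₀ j (!(u₀ j)))) :
    ∀ u, g₁ u = g₂ u := by
  intro u
  rw [cube_repr h₁ u₀ u, cube_repr h₂ u₀ u, h0]
  congr 1
  exact Finset.sum_congr rfl fun j _ => by rw [hflip j]

end Helpers

/-- let `S ⊆ {0,1}ⁿ` be the `k`-dimensional face of vectors whose last `n−k`
coordinates vanish, let `f` agree on `S` with a cube, and let `φ : {0,1}^m → {0,1}ⁿ` be a
cube morphism whose composition with the projection `τ` to the last `n−k` coordinates is
injective. Then every cube `c'` on `{0,1}^m` that agrees with `f∘φ` on `φ⁻¹(S)` lifts to a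
cube `c` on `{0,1}ⁿ` restricting to `f` on `S` and satisfying `c∘φ = c'`. -/
theorem cube_lifting_along_morphism
    {A : Type*} [AddCommGroup A] (n k m : ℕ) (hkn : k ≤ n)
    (f : (Fin n → Bool) → A)
    (hf : ∃ c₀ : (Fin n → Bool) → A, IsCube c₀ ∧
      ∀ v : Fin n → Bool, (∀ i : Fin n, k ≤ (i : ℕ) → v i = false) → f v = c₀ v)
    (φ : (Fin m → Bool) → (Fin n → Bool)) (hφ : IsCubeMorphism φ)
    (hinj : ∀ v w : Fin m → Bool,
      (∀ i : Fin n, k ≤ (i : ℕ) → φ v i = φ w i) → v = w)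
    (c' : (Fin m → Bool) → A) (hc' : IsCube c')
    (hagree : ∀ u : Fin m → Bool,
      (∀ i : Fin n, k ≤ (i : ℕ) → φ u i = false) → c' u = f (φ u)) :
    ∃ c : (Fin n → Bool) → A, IsCube c ∧
      (∀ v : Fin n → Bool, (∀ i : Fin n, k ≤ (i : ℕ) → v i = false) → c v = f v) ∧
      ∀ u : Fin m → Bool, c (φ u) = c' u := by
  classical
  obtain ⟨c₀, ⟨x, t, hct⟩, hfc⟩ := hf
  obtain ⟨e, he⟩ := exists_ct hφ
  -- for each j, there is a coordinate i ≥ k of type `u j` or `!(u j)`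
  have hσex : ∀ j : Fin m, ∃ p : Fin n × Bool, k ≤ (p.1 : ℕ) ∧ e p.1 = Sum.inr (j, p.2) := by
    intro j
    by_contra hcon
    push_neg at hcon
    have hvw := hinj (fun _ => false) (Function.update (fun _ => false) j true) ?_
    · have := congrFun hvw j
      simp at this
    · intro i hi
      rw [he _ i, he _ i]
      rcases hei : e i with b | ⟨j', s⟩
      · simp [hei, evalCT]
      · have hne : j' ≠ j := fun h => hcon (i, s) hi (by rw [hei, h])
        simp [hei, evalCT, Function.update_of_ne hne]
  choose σ hσ1 hσ2 using hσex
  set u₀ : Fin m → Bool := fun j => (σ j).2 with hu₀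
  have F1 : ∀ j, φ u₀ (σ j).1 = false := by
    intro j
    rw [he u₀ (σ j).1, hσ2 j]
    simp [evalCT, hu₀]
  have F2 : ∀ j j' : Fin m, j' ≠ j →
      φ (Function.update u₀ j (!(u₀ j))) (σ j').1 = false := by
    intro j j' hne
    rw [he _ (σ j').1, hσ2 j']
    simp [evalCT, Function.update_of_ne hne, hu₀]
  have F3 : ∀ j, φ (Function.update u₀ j (!(u₀ j))) (σ j).1 = true := by
    intro j
    rw [he _ (σ j).1, hσ2 j]
    simp [evalCT, hu₀]
  -- choose the optional "constant adjustment" coordinate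
  obtain ⟨io, hio1, hio2⟩ : ∃ io : Option (Fin n),
      (∀ i0 : Fin n, io = some i0 → k ≤ (i0 : ℕ) ∧ φ u₀ i0 = true) ∧
      (io = none → ∀ i : Fin n, k ≤ (i : ℕ) → φ u₀ i = false) := by
    by_cases hS : ∀ i : Fin n, k ≤ (i : ℕ) → φ u₀ i = false
    · exact ⟨none, fun i0 h => by simp at h, fun _ => hS⟩
    · push_neg at hS
      obtain ⟨i0, h1, h2⟩ := hS
      refine ⟨some i0, fun i0' h => ?_, fun h => by simp at h⟩
      obtain rfl := Option.some.inj h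
      exact ⟨h1, by simpa using h2⟩
  set g : (Fin n → Bool) → A :=
    fun v => x + ∑ i : Fin n, if (i : ℕ) < k then (if v i then t i else 0) else 0 with hg
  have gS : ∀ v : Fin n → Bool, (∀ i : Fin n, k ≤ (i : ℕ) → v i = false) → g v = c₀ v := by
    intro v hv
    rw [hg, hct v]
    simp only []
    congr 1
    refine Finset.sum_congr rfl fun i _ => ?_
    by_cases h : (i : ℕ) < k
    · rw [if_pos h]
    · simp [h, hv i (le_of_not_gt h)]
  set z : A := c' u₀ - g (φ u₀) with hz
  set hfn : (Fin n → Bool) → A := fun v => if io.elim false v then z else 0 with hhfn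
  set q : Fin m → A := fun j =>
    c' (Function.update u₀ j (!(u₀ j))) - g (φ (Function.update u₀ j (!(u₀ j))))
      - hfn (φ (Function.update u₀ j (!(u₀ j)))) with hq
  set c : (Fin n → Bool) → A :=
    fun v => g v + (∑ j, if v (σ j).1 then q j else 0) + hfn v with hc
  have hz0 : io = none → z = 0 := by
    intro h
    have hS := hio2 h
    rw [hz, hagree u₀ hS, hfc (φ u₀) hS, gS (φ u₀) hS, sub_self]
  have hfu₀ : hfn (φ u₀) = z := by
    rcases hio : io with _ | i0
    · simp [hhfn, hio, hz0 hio]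
    · have h2 := (hio1 i0 hio).2
      simp [hhfn, hio, h2]
  have hcu₀ : c (φ u₀) = c' u₀ := by
    have hmid : (∑ j, if φ u₀ (σ j).1 then q j else 0) = 0 :=
      Finset.sum_eq_zero fun j _ => by simp [F1 j]
    rw [hc]
    simp only []
    rw [hmid, hfu₀, hz]
    abel
  have hcuf : ∀ j, c (φ (Function.update u₀ j (!(u₀ j)))) = c' (Function.update u₀ j (!(u₀ j))) := by
    intro j
    have hmid : (∑ j', if φ (Function.update u₀ j (!(u₀ j))) (σ j').1 then q j' else 0) = q j := by
      rw [Finset.sum_eq_single j]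
      · simp [F3 j]
      · intro j' _ hne
        simp [F2 j j' hne]
      · intro h
        exact absurd (Finset.mem_univ j) h
    rw [hc]
    simp only []
    rw [hmid, hq]
    simp only []
    abel
  have hcube : IsCube c := by
    refine ⟨x, fun i => (if (i : ℕ) < k then t i else 0)
      + (∑ j, if (σ j).1 = i then q j else 0)
      + (io.elim 0 fun i0 => if i0 = i then z else 0), fun v => ?_⟩
    rw [hc, hg]
    simp only []
    have hsplit : ∀ i : Fin n, (if v i then ((if (i : ℕ) < k then t i else 0)
          + (∑ j, if (σ j).1 = i then q j else 0)
          + (io.elim 0 fun i0 => if i0 = i then z else 0)) else 0)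
        = (if v i then (if (i : ℕ) < k then t i else 0) else 0)
          + (if v i then (∑ j, if (σ j).1 = i then q j else 0) else 0)
          + (if v i then (io.elim 0 fun i0 => if i0 = i then z else 0) else 0) := by
      intro i; split <;> simp
    rw [Finset.sum_congr rfl fun i _ => hsplit i, Finset.sum_add_distrib,
      Finset.sum_add_distrib]
    have hA : ∀ i : Fin n, (if v i then (if (i : ℕ) < k then t i else 0) else 0)
        = (if (i : ℕ) < k then (if v i then t i else 0) else 0) := by
      intro i; cases h : v i <;> by_cases hk : (i : ℕ) < k <;> simp [h, hk]
    rw [Finset.sum_congr rfl fun i _ => hA i]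
    rw [sum_indicator_comp v (fun j => (σ j).1) q]
    have hC : (∑ i, if v i then (io.elim 0 fun i0 => if i0 = i then z else 0) else 0)
        = hfn v := by
      rcases hio : io with _ | i0
      · simp [hhfn, hio]
      · have hterm : ∀ i : Fin n, (if v i then (if i0 = i then z else 0) else 0)
            = if i0 = i then (if v i0 then z else 0) else 0 := by
          intro i
          by_cases h : i0 = i
          · subst h; simp
          · simp [h]
        simp only [hio, Option.elim_some]
        rw [Finset.sum_congr rfl fun i _ => hterm i]
        simp [hhfn, hio, Finset.sum_ite_eq]
    rw [hC]
    abel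
  have hrest : ∀ v : Fin n → Bool, (∀ i : Fin n, k ≤ (i : ℕ) → v i = false) → c v = f v := by
    intro v hv
    have h1 : (∑ j, if v (σ j).1 then q j else 0) = 0 :=
      Finset.sum_eq_zero fun j _ => by rw [hv (σ j).1 (hσ1 j)]; simp
    have h2 : hfn v = 0 := by
      rcases hio : io with _ | i0
      · simp [hhfn, hio]
      · have hk0 := (hio1 i0 hio).1
        simp [hhfn, hio, hv i0 hk0]
    rw [hc]
    simp only []
    rw [h1, h2, gS v hv, hfc v hv]
    abel
  have hcomp : ∀ u, c (φ u) = c' u := by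
    have hcc : IsCube (fun u => c (φ u)) := hcube.comp_morphism hφ
    exact cube_ext hcc hc' u₀ hcu₀ hcuf
  exact ⟨c, hcube, hrest, hcomp⟩
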